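/- Let e₁, e₂, e₃, e₄ ∈ ℝ transform as δe₁ = ξ₁₂e₂ + ξ₁₃e₃ + ξ₁₄e₄, δe₂ = ξ₁₂e₁ + ξ₁₃e₄ + ξ₁₄e₃, δe₃ = ξ₁₂e₄ + ξ₁₃e₁ + ξ₁₄e₂, δe₄ = ξ₁₂e₃ + ξ₁₃e₂ + ξ₁₄e₁ for arbitrary real ξ₁₂, ξ₁₃, ξ₁₄. Then the quartic expression 4·2(e₁⁴+e₂⁴+e₃⁴+e₄⁴) − 4(e₁²+e₂²+e₃²+e₄²)² + 32 e₁e₂e₃e₄ is invariant to first order in the ξ parameters. -/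
import Mathlib


theorem n8_normal_frame_invariant (e₁ e₂ e₃ e₄ ξ₁₂ ξ₁₃ ξ₁₄ : ℝ) :
    let de₁ : ℝ := ξ₁₂ * e₂ + ξ₁₃ * e₃ + ξ₁₄ * e₄
    let de₂ : ℝ := ξ₁₂ * e₁ + ξ₁₃ * e₄ + ξ₁₄ * e₃
    let de₃ : ℝ := ξ₁₂ * e₄ + ξ₁₃ * e₁ + ξ₁₄ * e₂
    let de₄ : ℝ := ξ₁₂ * e₃ + ξ₁₃ * e₂ + ξ₁₄ * e₁
    4 * 2 * (4 * e₁ ^ 3 * de₁ + 4 * e₂ ^ 3 * de₂ + 4 * e₃ ^ 3 * de₃ + 4 * e₄ ^ 3 * de₄) -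
        4 * (2 * (e₁ ^ 2 + e₂ ^ 2 + e₃ ^ 2 + e₄ ^ 2) *
          (2 * e₁ * de₁ + 2 * e₂ * de₂ + 2 * e₃ * de₃ + 2 * e₄ * de₄)) +
        32 * (de₁ * e₂ * e₃ * e₄ + e₁ * de₂ * e₃ * e₄ + e₁ * e₂ * de₃ * e₄ +
          e₁ * e₂ * e₃ * de₄) = 0 := by
  intro de₁ de₂ de₃ de₄; simp only [de₁, de₂, de₃, de₄]; ring
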